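/- Let d ≥ 1 and let C : ℝ^d → ℝ be an even function of the form C(u) = A(‖u‖) + B(‖u‖) + r(u), where A : ℝ → ℝ is even and real-analytic on ℝ, B : ℝ → ℝ satisfies B(0) = 0 and B(t) = c·t^α + o(t^α) as t ↓ 0 for some c ∈ ℝ and 0 < α < 4, and r satisfies r(0) = 0 and r(u) = o(‖u‖^α) as u → 0. For h > 0 define V(h) = h^{−4} · Σ_{g=1}^d Σ_{g'=1}^d [ 4·C(0) − 2·C(h·e_g) − 2·C(−h·e_g) − 2·C(h·e_{g'}) − 2·C(−h·e_{g'}) + C(h·(e_g − e_{g'})) + C(h·(e_g + e_{g'})) + C(−h·(e_g − e_{g'})) + C(−h·(e_g + e_{g'})) ], where e_g is the g-th standard basis vector of ℝ^d. Then V(h) = γ·c·h^{α−4} + o(h^{α−4}) as h ↓ 0, where γ = d·(2^{α+1} − 8) + d(d−1)·(2^{α/2+2} − 8). -/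

import Mathlib

open Filter Asymptotics
open scoped Topology

noncomputable section

/-- The discrete-Laplacian covariance combination `V(h)` of Statement 15. -/
def lapCovCombination (d : ℕ) (C : EuclideanSpace ℝ (Fin d) → ℝ) (h : ℝ) : ℝ :=
  (1 / h ^ 4) *
    ∑ g : Fin d, ∑ g' : Fin d,
      (4 * C 0
        - 2 * C (h • EuclideanSpace.single g (1 : ℝ))
        - 2 * C (-(h • EuclideanSpace.single g (1 : ℝ)))
        - 2 * C (h • EuclideanSpace.single g' (1 : ℝ))
        - 2 * C (-(h • EuclideanSpace.single g' (1 : ℝ)))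
        + C (h • (EuclideanSpace.single g (1 : ℝ) - EuclideanSpace.single g' (1 : ℝ)))
        + C (h • (EuclideanSpace.single g (1 : ℝ) + EuclideanSpace.single g' (1 : ℝ)))
        + C (-(h • (EuclideanSpace.single g (1 : ℝ) - EuclideanSpace.single g' (1 : ℝ))))
        + C (-(h • (EuclideanSpace.single g (1 : ℝ) + EuclideanSpace.single g' (1 : ℝ)))))

lemma oddDeriv_zero {A : ℝ → ℝ} (hAeven : ∀ t, A (-t) = A t)
    {n : ℕ} (hn : Odd n) : iteratedDeriv n A 0 = 0 := by
  have h := iteratedDeriv_comp_neg n A 0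
  rw [funext hAeven, neg_zero, hn.neg_one_pow] at h
  have : iteratedDeriv n A 0 = -iteratedDeriv n A 0 := by simpa using h
  linarith

lemma coeff_eq {A : ℝ → ℝ} {p : FormalMultilinearSeries ℝ ℝ ℝ}
    (hp : HasFPowerSeriesAt A p 0) (n : ℕ) :
    (n.factorial : ℝ) * p.coeff n = iteratedDeriv n A 0 := by
  obtain ⟨rad, hball⟩ := hp
  have h := hball.factorial_smul (y := (1:ℝ)) n
  rw [iteratedDeriv_eq_iteratedFDeriv, ← h, FormalMultilinearSeries.coeff,
    nsmul_eq_mul]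
  congr 1

lemma A_combo_bigO {A : ℝ → ℝ} (hAeven : ∀ t, A (-t) = A t)
    (hA : AnalyticOnNhd ℝ A Set.univ) (w0 w1 w2 s t : ℝ)
    (hw : w0 + w1 + w2 = 0) (hw2 : w1 * s ^ 2 + w2 * t ^ 2 = 0) :
    (fun h : ℝ => w0 * A 0 + w1 * A (s * h) + w2 * A (t * h)) =O[𝓝 (0:ℝ)]
      fun h : ℝ => h ^ (4:ℕ) := by
  obtain ⟨p, hp⟩ := hA 0 (Set.mem_univ 0)
  have hc1 : p.coeff 1 = 0 := by
    have := coeff_eq hp 1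
    rw [oddDeriv_zero hAeven (by norm_num)] at this
    simpa using this
  have hc3 : p.coeff 3 = 0 := by
    have := coeff_eq hp 3
    rw [oddDeriv_zero hAeven ⟨1, by norm_num⟩] at this
    have h3 : (6:ℝ) * p.coeff 3 = 0 := by simpa [Nat.factorial] using this
    linarith
  have hc0 : p.coeff 0 = A 0 := by
    have := coeff_eq hp 0
    simpa [Nat.factorial, iteratedDeriv_zero] using this
  -- Taylor estimate
  have hO : (fun y : ℝ => A y - (p.coeff 0 + p.coeff 2 * y ^ 2)) =O[𝓝 (0:ℝ)]
      fun y : ℝ => y ^ (4:ℕ) := by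
    have h4 := hp.isBigO_sub_partialSum_pow 4
    simp only [zero_add] at h4
    have hps : ∀ y : ℝ, p.partialSum 4 y = p.coeff 0 + p.coeff 2 * y ^ 2 := by
      intro y
      simp only [FormalMultilinearSeries.partialSum, Finset.sum_range_succ,
        Finset.sum_range_zero, FormalMultilinearSeries.apply_eq_pow_smul_coeff,
        hc1, hc3, smul_eq_mul]
      ring
    have h4' : (fun y : ℝ => A y - (p.coeff 0 + p.coeff 2 * y ^ 2)) =O[𝓝 (0:ℝ)]
        fun y : ℝ => ‖y‖ ^ (4:ℕ) := by
      refine h4.congr_left ?_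
      intro y; rw [hps]
    refine h4'.trans (isBigO_of_le _ ?_)
    intro y; simp [abs_pow]
  set R : ℝ → ℝ := fun y => A y - (p.coeff 0 + p.coeff 2 * y ^ 2) with hR
  have comp : ∀ u : ℝ, (fun h : ℝ => R (u * h)) =O[𝓝 (0:ℝ)] fun h : ℝ => h ^ (4:ℕ) := by
    intro u
    have htend : Tendsto (fun h : ℝ => u * h) (𝓝 0) (𝓝 0) := by
      simpa using (continuous_mul_left u).tendsto (0:ℝ)
    have h1 : (fun h : ℝ => R (u * h)) =O[𝓝 (0:ℝ)] fun h : ℝ => (u * h) ^ (4:ℕ) :=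
      hO.comp_tendsto htend
    refine h1.trans ?_
    have h2 : (fun h : ℝ => (u * h) ^ (4:ℕ)) = fun h : ℝ => u ^ (4:ℕ) * h ^ (4:ℕ) := by
      funext h; ring
    rw [h2]
    exact isBigO_const_mul_self _ _ _
  have heq : (fun h : ℝ => w0 * A 0 + w1 * A (s * h) + w2 * A (t * h))
      = fun h : ℝ => w1 * R (s * h) + w2 * R (t * h) := by
    funext h
    simp only [hR]
    rw [hc0]
    linear_combination (A 0) * hw + (p.coeff 2 * h ^ 2) * hw2
  rw [heq]
  exact (((comp s).const_mul_left w1).add ((comp t).const_mul_left w2))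

lemma pow4_littleO {α : ℝ} (hα0 : 0 < α) (hα4 : α < 4) :
    (fun h : ℝ => h ^ (4:ℕ)) =o[𝓝[>] (0:ℝ)] fun h : ℝ => h ^ α := by
  refine isLittleO_of_tendsto' ?_ ?_
  · filter_upwards [self_mem_nhdsWithin] with h hh hz
    exact absurd hz (ne_of_gt (Real.rpow_pos_of_pos hh α))
  · have htend : Tendsto (fun h : ℝ => h ^ (4 - α)) (𝓝[>] (0:ℝ)) (𝓝 0) := by
      have hc : ContinuousAt (fun x : ℝ => x ^ (4 - α)) 0 :=
        Real.continuousAt_rpow_const 0 (4 - α) (Or.inr (by linarith))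
      have := hc.continuousWithinAt (s := Set.Ioi (0:ℝ))
      have h0 : (0:ℝ) ^ (4 - α) = 0 := Real.zero_rpow (by linarith)
      simpa [ContinuousWithinAt, h0] using this
    refine htend.congr' ?_
    filter_upwards [self_mem_nhdsWithin] with h hh
    rw [Set.mem_Ioi] at hh
    rw [Real.rpow_sub hh, ← Real.rpow_natCast h 4]
    norm_num

lemma B_comp {B : ℝ → ℝ} {c α : ℝ}
    (hB : (fun t : ℝ => B t - c * t ^ α) =o[𝓝[>] (0:ℝ)] fun t : ℝ => t ^ α)
    {s : ℝ} (hs : 0 < s) :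
    (fun h : ℝ => B (s * h) - c * s ^ α * h ^ α) =o[𝓝[>] (0:ℝ)] fun h : ℝ => h ^ α := by
  have htend : Tendsto (fun h : ℝ => s * h) (𝓝[>] (0:ℝ)) (𝓝[>] (0:ℝ)) := by
    rw [tendsto_nhdsWithin_iff]
    constructor
    · have : Tendsto (fun h : ℝ => s * h) (𝓝 0) (𝓝 0) := by
        simpa using (continuous_mul_left s).tendsto (0:ℝ)
      exact this.mono_left nhdsWithin_le_nhds
    · filter_upwards [self_mem_nhdsWithin] with h hh
      exact Set.mem_Ioi.mpr (mul_pos hs (Set.mem_Ioi.mp hh))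
  have comp : (fun h : ℝ => B (s * h) - c * (s * h) ^ α) =o[𝓝[>] (0:ℝ)]
      fun h : ℝ => (s * h) ^ α := hB.comp_tendsto htend
  have heq : ∀ᶠ h in 𝓝[>] (0:ℝ), (s * h) ^ α = s ^ α * h ^ α := by
    filter_upwards [self_mem_nhdsWithin] with h hh
    exact Real.mul_rpow hs.le (Set.mem_Ioi.mp hh).le
  have comp2 : (fun h : ℝ => B (s * h) - c * s ^ α * h ^ α) =o[𝓝[>] (0:ℝ)]
      fun h : ℝ => s ^ α * h ^ α := by
    refine comp.congr' ?_ heq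
    filter_upwards [heq] with h hh
    rw [hh]; ring
  exact comp2.trans_isBigO (isBigO_const_mul_self _ _ _)

lemma r_comp {d : ℕ} {r : EuclideanSpace ℝ (Fin d) → ℝ} {α : ℝ} (hα0 : 0 < α)
    (hr : (fun u => r u) =o[𝓝 (0 : EuclideanSpace ℝ (Fin d))] fun u => ‖u‖ ^ α)
    (v : EuclideanSpace ℝ (Fin d)) :
    (fun h : ℝ => r (h • v)) =o[𝓝[>] (0:ℝ)] fun h : ℝ => h ^ α := by
  have htend : Tendsto (fun h : ℝ => h • v) (𝓝[>] (0:ℝ)) (𝓝 (0 : EuclideanSpace ℝ (Fin d))) := by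
    have : Tendsto (fun h : ℝ => h • v) (𝓝 (0:ℝ)) (𝓝 (0 : EuclideanSpace ℝ (Fin d))) := by
      have hc : Continuous (fun h : ℝ => h • v) := continuous_id.smul continuous_const
      simpa using hc.tendsto (0:ℝ)
    exact this.mono_left nhdsWithin_le_nhds
  have comp : (fun h : ℝ => r (h • v)) =o[𝓝[>] (0:ℝ)] fun h : ℝ => ‖h • v‖ ^ α :=
    hr.comp_tendsto htend
  have comp2 : (fun h : ℝ => r (h • v)) =o[𝓝[>] (0:ℝ)] fun h : ℝ => ‖v‖ ^ α * h ^ α := by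
    refine comp.congr' (by rfl) ?_
    filter_upwards [self_mem_nhdsWithin] with h hh
    rw [norm_smul, Real.norm_eq_abs, abs_of_pos (Set.mem_Ioi.mp hh),
      Real.mul_rpow (Set.mem_Ioi.mp hh).le (norm_nonneg v)]
    ring
  exact comp2.trans_isBigO (isBigO_const_mul_self _ _ _)

lemma norm_single_one {d : ℕ} (g : Fin d) : ‖EuclideanSpace.single g (1:ℝ)‖ = 1 := by
  simp [EuclideanSpace.norm_single]

lemma norm_add_single {d : ℕ} {g g' : Fin d} (hgg : g ≠ g') :
    ‖EuclideanSpace.single g (1:ℝ) + EuclideanSpace.single g' (1:ℝ)‖ = Real.sqrt 2 := by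
  have hi : inner ℝ (EuclideanSpace.single g (1:ℝ)) (EuclideanSpace.single g' (1:ℝ)) = 0 := by
    simp [EuclideanSpace.inner_single_left, EuclideanSpace.single_apply, hgg.symm]
  have h2 : ‖EuclideanSpace.single g (1:ℝ) + EuclideanSpace.single g' (1:ℝ)‖ ^ 2 = 2 := by
    rw [norm_add_sq_real, hi, norm_single_one, norm_single_one]; norm_num
  rw [← Real.sqrt_sq (norm_nonneg _), h2]

lemma norm_sub_single {d : ℕ} {g g' : Fin d} (hgg : g ≠ g') :
    ‖EuclideanSpace.single g (1:ℝ) - EuclideanSpace.single g' (1:ℝ)‖ = Real.sqrt 2 := by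
  have hi : inner ℝ (EuclideanSpace.single g (1:ℝ)) (EuclideanSpace.single g' (1:ℝ)) = 0 := by
    simp [EuclideanSpace.inner_single_left, EuclideanSpace.single_apply, hgg.symm]
  have h2 : ‖EuclideanSpace.single g (1:ℝ) - EuclideanSpace.single g' (1:ℝ)‖ ^ 2 = 2 := by
    rw [norm_sub_sq_real, hi, norm_single_one, norm_single_one]; norm_num
  rw [← Real.sqrt_sq (norm_nonneg _), h2]

lemma norm_self_add_self {d : ℕ} (g : Fin d) :
    ‖EuclideanSpace.single g (1:ℝ) + EuclideanSpace.single g (1:ℝ)‖ = 2 := by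
  rw [← two_smul ℝ, norm_smul, norm_single_one]
  norm_num


/-- Lemma S1 of the supplement. For an even covariance
`C(u) = A(‖u‖) + B(‖u‖) + r(u)` with `A` even analytic, `B(t) = c t^α + o(t^α)`
(`0 < α < 4`) and `r(u) = o(‖u‖^α)`, the Laplacian combination satisfies
`V(h) = γ c h^{α−4} + o(h^{α−4})` as `h ↓ 0` with
`γ = d(2^{α+1} − 8) + d(d−1)(2^{α/2+2} − 8)`. -/
theorem laplacian_covariance_expansion
    (d : ℕ) (hd : 1 ≤ d)
    (C : EuclideanSpace ℝ (Fin d) → ℝ) (hCeven : ∀ u, C (-u) = C u)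
    (A B : ℝ → ℝ) (r : EuclideanSpace ℝ (Fin d) → ℝ)
    (hAeven : ∀ t, A (-t) = A t) (hA : AnalyticOnNhd ℝ A Set.univ)
    (c α : ℝ) (hα0 : 0 < α) (hα4 : α < 4)
    (hB0 : B 0 = 0)
    (hB : (fun t : ℝ => B t - c * t ^ α) =o[𝓝[>] (0 : ℝ)] fun t : ℝ => t ^ α)
    (hr0 : r 0 = 0)
    (hr : (fun u => r u) =o[𝓝 (0 : EuclideanSpace ℝ (Fin d))] fun u => ‖u‖ ^ α)
    (hdecomp : ∀ u, C u = A ‖u‖ + B ‖u‖ + r u) :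
    (fun h : ℝ =>
        lapCovCombination d C h
          - ((d : ℝ) * ((2 : ℝ) ^ (α + 1) - 8)
              + (d : ℝ) * ((d : ℝ) - 1) * ((2 : ℝ) ^ (α / 2 + 2) - 8)) * c * h ^ (α - 4))
      =o[𝓝[>] (0 : ℝ)] fun h : ℝ => h ^ (α - 4) := by
  have key : ∀ g g' : Fin d,
      (fun h : ℝ =>
        (4 * C 0
        - 2 * C (h • EuclideanSpace.single g (1 : ℝ))
        - 2 * C (-(h • EuclideanSpace.single g (1 : ℝ)))
        - 2 * C (h • EuclideanSpace.single g' (1 : ℝ))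
        - 2 * C (-(h • EuclideanSpace.single g' (1 : ℝ)))
        + C (h • (EuclideanSpace.single g (1 : ℝ) - EuclideanSpace.single g' (1 : ℝ)))
        + C (h • (EuclideanSpace.single g (1 : ℝ) + EuclideanSpace.single g' (1 : ℝ)))
        + C (-(h • (EuclideanSpace.single g (1 : ℝ) - EuclideanSpace.single g' (1 : ℝ))))
        + C (-(h • (EuclideanSpace.single g (1 : ℝ) + EuclideanSpace.single g' (1 : ℝ)))))
        - (if g = g' then c * ((2:ℝ) ^ (α + 1) - 8) else c * ((2:ℝ) ^ (α / 2 + 2) - 8)) * h ^ α)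
      =o[𝓝[>] (0:ℝ)] fun h : ℝ => h ^ α := by
    intro g g'
    by_cases hgg : g = g'
    · subst hgg
      have hEA := ((A_combo_bigO hAeven hA 6 (-8) 2 1 2 (by norm_num) (by norm_num)).mono
        nhdsWithin_le_nhds).trans_isLittleO (pow4_littleO hα0 hα4)
      have hEB := ((B_comp hB one_pos).const_mul_left (-8 : ℝ)).add
        ((B_comp hB two_pos).const_mul_left (2 : ℝ))
      simp only [one_mul, Real.one_rpow, mul_one] at hEA hEB
      have hEr := ((r_comp hα0 hr (EuclideanSpace.single g (1:ℝ))).const_mul_left (-8 : ℝ)).add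
        ((r_comp hα0 hr
          (EuclideanSpace.single g (1:ℝ) + EuclideanSpace.single g (1:ℝ))).const_mul_left (2 : ℝ))
      refine ((hEA.add hEB).add hEr).congr' ?_ (by rfl)
      filter_upwards [self_mem_nhdsWithin] with h hh
      have hh' : (0:ℝ) < h := hh
      have hC0 : C 0 = A 0 := by
        rw [hdecomp]; simp [hB0, hr0]
      have hCe : C (h • EuclideanSpace.single g (1:ℝ))
          = A h + B h + r (h • EuclideanSpace.single g (1:ℝ)) := by
        rw [hdecomp, norm_smul, norm_single_one, Real.norm_eq_abs, abs_of_pos hh', mul_one]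
      have hCee : C (h • (EuclideanSpace.single g (1:ℝ) + EuclideanSpace.single g (1:ℝ)))
          = A (2 * h) + B (2 * h)
            + r (h • (EuclideanSpace.single g (1:ℝ) + EuclideanSpace.single g (1:ℝ))) := by
        rw [hdecomp, norm_smul, norm_self_add_self, Real.norm_eq_abs, abs_of_pos hh',
          mul_comm h 2]
      have h2a : (2:ℝ) ^ (α + 1) = 2 ^ α * 2 := by
        rw [Real.rpow_add (by norm_num : (0:ℝ) < 2), Real.rpow_one]
      rw [if_pos rfl]
      simp only [hCeven, sub_self, smul_zero, hC0, hCe, hCee]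
      rw [h2a]
      ring
    · have hs2 : (0:ℝ) < Real.sqrt 2 := Real.sqrt_pos.mpr two_pos
      have hEA := ((A_combo_bigO hAeven hA 4 (-8) 4 1 (Real.sqrt 2) (by norm_num)
        (by rw [Real.sq_sqrt (by norm_num : (0:ℝ) ≤ 2)]; norm_num)).mono
        nhdsWithin_le_nhds).trans_isLittleO (pow4_littleO hα0 hα4)
      have hEB := ((B_comp hB one_pos).const_mul_left (-8 : ℝ)).add
        ((B_comp hB hs2).const_mul_left (4 : ℝ))
      simp only [one_mul, Real.one_rpow, mul_one] at hEA hEB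
      have hEr1 := (r_comp hα0 hr (EuclideanSpace.single g (1:ℝ))).const_mul_left (-4 : ℝ)
      have hEr2 := (r_comp hα0 hr (EuclideanSpace.single g' (1:ℝ))).const_mul_left (-4 : ℝ)
      have hEr3 := (r_comp hα0 hr (EuclideanSpace.single g (1:ℝ) -
          EuclideanSpace.single g' (1:ℝ))).const_mul_left (2 : ℝ)
      have hEr4 := (r_comp hα0 hr (EuclideanSpace.single g (1:ℝ) +
          EuclideanSpace.single g' (1:ℝ))).const_mul_left (2 : ℝ)
      have hEr := (hEr1.add hEr2).add (hEr3.add hEr4)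
      refine ((hEA.add hEB).add hEr).congr' ?_ (by rfl)
      filter_upwards [self_mem_nhdsWithin] with h hh
      have hh' : (0:ℝ) < h := hh
      have hC0 : C 0 = A 0 := by
        rw [hdecomp]; simp [hB0, hr0]
      have hCe : ∀ g₀ : Fin d, C (h • EuclideanSpace.single g₀ (1:ℝ))
          = A h + B h + r (h • EuclideanSpace.single g₀ (1:ℝ)) := by
        intro g₀
        rw [hdecomp, norm_smul, norm_single_one, Real.norm_eq_abs, abs_of_pos hh', mul_one]
      have hCsub : C (h • (EuclideanSpace.single g (1:ℝ) - EuclideanSpace.single g' (1:ℝ)))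
          = A (Real.sqrt 2 * h) + B (Real.sqrt 2 * h)
            + r (h • (EuclideanSpace.single g (1:ℝ) - EuclideanSpace.single g' (1:ℝ))) := by
        rw [hdecomp, norm_smul, norm_sub_single hgg, Real.norm_eq_abs, abs_of_pos hh',
          mul_comm h (Real.sqrt 2)]
      have hCadd : C (h • (EuclideanSpace.single g (1:ℝ) + EuclideanSpace.single g' (1:ℝ)))
          = A (Real.sqrt 2 * h) + B (Real.sqrt 2 * h)
            + r (h • (EuclideanSpace.single g (1:ℝ) + EuclideanSpace.single g' (1:ℝ))) := by
        rw [hdecomp, norm_smul, norm_add_single hgg, Real.norm_eq_abs, abs_of_pos hh',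
          mul_comm h (Real.sqrt 2)]
      have hsa : (Real.sqrt 2) ^ α = (2:ℝ) ^ (α / 2) := by
        rw [show Real.sqrt 2 = (2:ℝ) ^ ((1:ℝ)/2) from Real.sqrt_eq_rpow 2,
          ← Real.rpow_mul (by norm_num : (0:ℝ) ≤ 2)]
        norm_num
        rw [show (1:ℝ)/2 * α = α / 2 by ring]
      have h22 : (2:ℝ) ^ (2:ℝ) = 4 := by
        rw [show (2:ℝ) = ((2:ℕ):ℝ) from by norm_num, Real.rpow_natCast]
        norm_num
      have h4a : (2:ℝ) ^ (α / 2 + 2) = 2 ^ (α / 2) * 4 := by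
        rw [Real.rpow_add (by norm_num : (0:ℝ) < 2), h22]
      rw [if_neg hgg]
      simp only [hCeven, hC0, hCe, hCsub, hCadd]
      rw [hsa, h4a]
      ring
  set a : ℝ := c * ((2:ℝ) ^ (α + 1) - 8) with ha
  set b : ℝ := c * ((2:ℝ) ^ (α / 2 + 2) - 8) with hb
  have hinner : ∀ g : Fin d, (∑ g' : Fin d, if g = g' then a else b)
      = a + ((d:ℝ) - 1) * b := by
    intro g
    have hsplit : ∀ g' : Fin d, (if g = g' then a else b)
        = b + (if g = g' then a - b else 0) := by
      intro g'; by_cases hx : g = g' <;> simp [hx]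
    simp_rw [hsplit]
    rw [Finset.sum_add_distrib, Finset.sum_const, Finset.sum_ite_eq, Finset.card_univ,
      Fintype.card_fin]
    simp [nsmul_eq_mul]
    ring
  have hT : (∑ g : Fin d, ∑ g' : Fin d, if g = g' then a else b)
      = (d:ℝ) * a + (d:ℝ) * ((d:ℝ) - 1) * b := by
    simp_rw [hinner]
    rw [Finset.sum_const, Finset.card_univ, Fintype.card_fin, nsmul_eq_mul]
    ring
  have hsum0 : (fun h : ℝ => ∑ g : Fin d, ∑ g' : Fin d,
      ((4 * C 0
        - 2 * C (h • EuclideanSpace.single g (1 : ℝ))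
        - 2 * C (-(h • EuclideanSpace.single g (1 : ℝ)))
        - 2 * C (h • EuclideanSpace.single g' (1 : ℝ))
        - 2 * C (-(h • EuclideanSpace.single g' (1 : ℝ)))
        + C (h • (EuclideanSpace.single g (1 : ℝ) - EuclideanSpace.single g' (1 : ℝ)))
        + C (h • (EuclideanSpace.single g (1 : ℝ) + EuclideanSpace.single g' (1 : ℝ)))
        + C (-(h • (EuclideanSpace.single g (1 : ℝ) - EuclideanSpace.single g' (1 : ℝ))))
        + C (-(h • (EuclideanSpace.single g (1 : ℝ) + EuclideanSpace.single g' (1 : ℝ)))))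
        - (if g = g' then a else b) * h ^ α))
      =o[𝓝[>] (0:ℝ)] fun h : ℝ => h ^ α :=
    IsLittleO.fun_sum fun g _ => IsLittleO.fun_sum fun g' _ => key g g'
  have hS : (fun h : ℝ => (∑ g : Fin d, ∑ g' : Fin d,
      (4 * C 0
        - 2 * C (h • EuclideanSpace.single g (1 : ℝ))
        - 2 * C (-(h • EuclideanSpace.single g (1 : ℝ)))
        - 2 * C (h • EuclideanSpace.single g' (1 : ℝ))
        - 2 * C (-(h • EuclideanSpace.single g' (1 : ℝ)))
        + C (h • (EuclideanSpace.single g (1 : ℝ) - EuclideanSpace.single g' (1 : ℝ)))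
        + C (h • (EuclideanSpace.single g (1 : ℝ) + EuclideanSpace.single g' (1 : ℝ)))
        + C (-(h • (EuclideanSpace.single g (1 : ℝ) - EuclideanSpace.single g' (1 : ℝ))))
        + C (-(h • (EuclideanSpace.single g (1 : ℝ) + EuclideanSpace.single g' (1 : ℝ))))))
      - ((d:ℝ) * a + (d:ℝ) * ((d:ℝ) - 1) * b) * h ^ α)
      =o[𝓝[>] (0:ℝ)] fun h : ℝ => h ^ α := by
    refine hsum0.congr' (Eventually.of_forall fun h => ?_) (by rfl)
    simp only [Finset.sum_sub_distrib, ← Finset.sum_mul, hT]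
  have final0 := (isBigO_refl (fun h : ℝ => 1 / h ^ (4:ℕ)) (𝓝[>] (0:ℝ))).mul_isLittleO hS
  refine final0.congr' ?_ ?_
  · filter_upwards [self_mem_nhdsWithin] with h hh
    have hh' : (0:ℝ) < h := hh
    have hpow : h ^ (α - 4) = h ^ α / h ^ (4:ℕ) := by
      rw [← Real.rpow_natCast h 4, ← Real.rpow_sub hh']
      norm_num
    have h4 : (h:ℝ) ^ (4:ℕ) ≠ 0 := by positivity
    simp only [lapCovCombination, hpow]
    field_simp
    rw [ha, hb, show (α + 2 ^ 2) / 2 = α / 2 + 2 by ring]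
    ring
  · filter_upwards [self_mem_nhdsWithin] with h hh
    have hh' : (0:ℝ) < h := hh
    have hpow : h ^ (α - 4) = h ^ α / h ^ (4:ℕ) := by
      rw [← Real.rpow_natCast h 4, ← Real.rpow_sub hh']
      norm_num
    rw [hpow]
    ring
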